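/- Let n ≥ 2, d ≥ 1, and let t be a positive multiple of d with t ≥ 2 * d * log₂ n. Then for any fixed set D ⊆ Fin n with |D| ≤ d, the random design on n items with 2t tests and column-sparsity t/d is D-distinguishing with probability at least 1 − 1/n. -/

import Mathlib

open Finset

private lemma desc_bound (t : ℕ) :
    ∀ s ≤ t, 2 ^ s * Nat.descFactorial t s ≤ Nat.descFactorial (2 * t) s := by
  intro s
  induction s with
  | zero => intro _; simp
  | succ s ih =>
    intro hst
    have hs : s ≤ t := Nat.le_of_succ_le hst
    rw [Nat.descFactorial_succ, Nat.descFactorial_succ, pow_succ]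
    calc 2 ^ s * 2 * ((t - s) * Nat.descFactorial t s)
        = (2 * (t - s)) * (2 ^ s * Nat.descFactorial t s) := by ring
      _ ≤ (2 * t - s) * Nat.descFactorial (2 * t) s :=
          Nat.mul_le_mul (by omega) (ih hs)

private lemma choose_bound (t s : ℕ) (hst : s ≤ t) :
    2 ^ s * Nat.choose t s ≤ Nat.choose (2 * t) s := by
  have h := desc_bound t s hst
  rw [Nat.descFactorial_eq_factorial_mul_choose, Nat.descFactorial_eq_factorial_mul_choose] at h
  have h2 : Nat.factorial s * (2 ^ s * Nat.choose t s)
      ≤ Nat.factorial s * Nat.choose (2 * t) s := by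
    calc Nat.factorial s * (2 ^ s * Nat.choose t s)
        = 2 ^ s * (Nat.factorial s * Nat.choose t s) := by ring
      _ ≤ _ := h
  exact Nat.le_of_mul_le_mul_left h2 (Nat.factorial_pos s)

private lemma col_bound {n t s d : ℕ} (hds : d * s = t) (D : Finset (Fin n)) (hD : D.card ≤ d)
    (j : Fin n) (hj : j ∉ D) :
    ((Finset.univ.filter (fun S : Fin n → Finset (Fin (2 * t)) => ∀ i, (S i).card = s)).filter
        (fun S => ∀ i ∈ S j, ∃ k ∈ D, i ∈ S k)).card
      ≤ Nat.choose t s * Nat.choose (2 * t) s ^ (n - 1) := by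
  classical
  set Bj := ((Finset.univ.filter
      (fun S : Fin n → Finset (Fin (2 * t)) => ∀ i, (S i).card = s)).filter
        (fun S => ∀ i ∈ S j, ∃ k ∈ D, i ∈ S k)) with hBj
  set T : Finset (Fin n → Finset (Fin (2 * t))) :=
    Fintype.piFinset (fun i : Fin n =>
      if i = j then ({∅} : Finset (Finset (Fin (2 * t)))) else Finset.powersetCard s Finset.univ)
    with hT
  have hmap : ∀ S ∈ Bj, Function.update S j ∅ ∈ T := by
    intro S hS
    rw [Finset.mem_filter, Finset.mem_filter] at hS
    rw [hT, Fintype.mem_piFinset]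
    intro i
    by_cases hij : i = j
    · subst hij; simp [Function.update_self]
    · rw [Function.update_of_ne hij, if_neg hij, Finset.mem_powersetCard_univ]
      exact hS.1.2 i
  rw [Finset.card_eq_sum_card_fiberwise hmap]
  have hfiber : ∀ g ∈ T,
      (Bj.filter (fun S => Function.update S j ∅ = g)).card ≤ Nat.choose t s := by
    intro g hg
    have hgk : ∀ k ∈ D, (g k).card = s := by
      intro k hk
      have hkj : k ≠ j := fun h => hj (h ▸ hk)
      rw [hT, Fintype.mem_piFinset] at hg
      have := hg k
      rw [if_neg hkj, Finset.mem_powersetCard_univ] at this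
      exact this
    have hcard : (D.biUnion g).card ≤ t := by
      calc (D.biUnion g).card ≤ ∑ k ∈ D, (g k).card := Finset.card_biUnion_le
        _ = ∑ k ∈ D, s := Finset.sum_congr rfl hgk
        _ = D.card * s := by rw [Finset.sum_const, smul_eq_mul]
        _ ≤ d * s := Nat.mul_le_mul_right s hD
        _ = t := hds
    calc (Bj.filter (fun S => Function.update S j ∅ = g)).card
        ≤ (Finset.powersetCard s (D.biUnion g)).card := by
          apply Finset.card_le_card_of_injOn (fun S => S j)
          · intro S hS
            rw [Finset.mem_coe, Finset.mem_filter] at hS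
            obtain ⟨hSB, hSg⟩ := hS
            rw [hBj, Finset.mem_filter, Finset.mem_filter] at hSB
            rw [Finset.mem_coe, Finset.mem_powersetCard]
            constructor
            · intro i hi
              obtain ⟨k, hk, hik⟩ := hSB.2 i hi
              have hkj : k ≠ j := fun h => hj (h ▸ hk)
              rw [Finset.mem_biUnion]
              refine ⟨k, hk, ?_⟩
              rw [← hSg, Function.update_of_ne hkj]
              exact hik
            · exact hSB.1.2 j
          · intro S₁ hS₁ S₂ hS₂ hSj
            simp only [Finset.coe_filter, Set.mem_setOf_eq] at hS₁ hS₂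
            funext i
            by_cases hij : i = j
            · subst hij; exact hSj
            · have := hS₁.2.trans hS₂.2.symm
              calc S₁ i = Function.update S₁ j ∅ i := (Function.update_of_ne hij _ _).symm
                _ = Function.update S₂ j ∅ i := by rw [this]
                _ = S₂ i := Function.update_of_ne hij _ _
      _ = (D.biUnion g).card.choose s := Finset.card_powersetCard s _
      _ ≤ Nat.choose t s := Nat.choose_le_choose s hcard
  calc ∑ g ∈ T, (Bj.filter (fun S => Function.update S j ∅ = g)).card
      ≤ ∑ g ∈ T, Nat.choose t s := Finset.sum_le_sum hfiber
    _ = T.card * Nat.choose t s := by rw [Finset.sum_const, smul_eq_mul]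
    _ = Nat.choose (2 * t) s ^ (n - 1) * Nat.choose t s := by
        congr 1
        rw [hT, Fintype.card_piFinset]
        have hfun : ∀ i : Fin n,
            ((if i = j then ({∅} : Finset (Finset (Fin (2 * t)))) else
              Finset.powersetCard s Finset.univ)).card
            = if i = j then 1 else Nat.choose (2 * t) s := by
          intro i
          by_cases hij : i = j <;>
            simp [hij, Finset.card_powersetCard, Finset.card_univ]
        rw [Finset.prod_congr rfl (fun i _ => hfun i),
          ← Finset.mul_prod_erase Finset.univ _ (Finset.mem_univ j), if_pos rfl, one_mul]
        rw [Finset.prod_congr rfl (fun i hi => if_neg (Finset.ne_of_mem_erase hi)),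
          Finset.prod_const, Finset.card_erase_of_mem (Finset.mem_univ j),
          Finset.card_univ, Fintype.card_fin]
    _ = Nat.choose t s * Nat.choose (2 * t) s ^ (n - 1) := mul_comm _ _

/-- Let `n ≥ 2`, `d ≥ 1`, and `t` a positive multiple of `d` with
`t ≥ 2·d·log₂ n`.  For any fixed `D ⊆ Fin n` with `|D| ≤ d`, the random design
on `n` items with `2t` tests and column-sparsity `t/d` is `D`-distinguishing
with probability at least `1 - 1/n`. -/
theorem prob_distinguishing_ge (n t d : ℕ) (hn : 2 ≤ n) (hd : 1 ≤ d)
    (ht : 0 < t) (hdvd : d ∣ t) (htb : 2 * (d : ℝ) * Real.logb 2 n ≤ t)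
    (D : Finset (Fin n)) (hD : D.card ≤ d) :
    1 - 1 / (n : ℝ) ≤
      (((Finset.univ.filter
            (fun S : Fin n → Finset (Fin (2 * t)) => ∀ i, (S i).card = t / d)).filter
          (fun S => ∀ j ∉ D, ∃ i ∈ S j, ∀ k ∈ D, i ∉ S k)).card : ℝ) /
        ((Finset.univ.filter
            (fun S : Fin n → Finset (Fin (2 * t)) => ∀ i, (S i).card = t / d)).card : ℝ) := by
  classical
  set s := t / d with hs
  have hds : d * s = t := Nat.mul_div_cancel' hdvd
  have hst : s ≤ t := Nat.div_le_self t d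
  have hs2t : s ≤ 2 * t := le_trans hst (by omega)
  set Ω := (Finset.univ.filter
      (fun S : Fin n → Finset (Fin (2 * t)) => ∀ i, (S i).card = s)) with hΩ
  set C := Nat.choose (2 * t) s with hC
  set Ct := Nat.choose t s with hCt
  have hCpos : 0 < C := Nat.choose_pos hs2t
  -- total count
  have hΩcard : Ω.card = C ^ n := by
    have : Ω = Fintype.piFinset
        (fun _ : Fin n => Finset.powersetCard s (Finset.univ : Finset (Fin (2 * t)))) := by
      ext S
      simp [hΩ, Fintype.mem_piFinset, Finset.mem_powersetCard_univ]
    rw [this, Fintype.card_piFinset]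
    simp [Finset.card_powersetCard, Finset.card_univ, hC]
  -- bad set
  set B := Ω.filter (fun S => ¬ ∀ j ∉ D, ∃ i ∈ S j, ∀ k ∈ D, i ∉ S k) with hB
  have hBsub : B ⊆ Dᶜ.biUnion (fun j => Ω.filter (fun S => ∀ i ∈ S j, ∃ k ∈ D, i ∈ S k)) := by
    intro S hS
    rw [hB, Finset.mem_filter] at hS
    obtain ⟨hSΩ, hbad⟩ := hS
    push_neg at hbad
    obtain ⟨j, hj, hcov⟩ := hbad
    rw [Finset.mem_biUnion]
    exact ⟨j, Finset.mem_compl.2 hj, Finset.mem_filter.2 ⟨hSΩ, hcov⟩⟩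
  have hBcard : B.card ≤ n * (Ct * C ^ (n - 1)) := by
    calc B.card ≤ (Dᶜ.biUnion (fun j => Ω.filter (fun S => ∀ i ∈ S j, ∃ k ∈ D, i ∈ S k))).card :=
          Finset.card_le_card hBsub
      _ ≤ ∑ j ∈ Dᶜ, (Ω.filter (fun S => ∀ i ∈ S j, ∃ k ∈ D, i ∈ S k)).card :=
          Finset.card_biUnion_le
      _ ≤ ∑ j ∈ Dᶜ, Ct * C ^ (n - 1) := by
          apply Finset.sum_le_sum
          intro j hj
          exact col_bound hds D hD j (Finset.mem_compl.1 hj)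
      _ = Dᶜ.card * (Ct * C ^ (n - 1)) := by rw [Finset.sum_const, smul_eq_mul]
      _ ≤ n * (Ct * C ^ (n - 1)) := by
          apply Nat.mul_le_mul_right
          calc Dᶜ.card ≤ (Finset.univ : Finset (Fin n)).card := Finset.card_le_card (Finset.subset_univ _)
            _ = n := by rw [Finset.card_univ, Fintype.card_fin]
  -- n^2 ≤ 2^s
  have hn0 : (0:ℝ) < n := by positivity
  have hns : (n : ℕ) ^ 2 ≤ 2 ^ s := by
    have hlog : 2 * Real.logb 2 n ≤ (s : ℝ) := by
      have hd0 : (0:ℝ) < d := by exact_mod_cast hd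
      have h1 : (d:ℝ) * (2 * Real.logb 2 n) ≤ (d:ℝ) * s := by
        have ht' : (t:ℝ) = d * s := by exact_mod_cast hds.symm
        calc (d:ℝ) * (2 * Real.logb 2 n) = 2 * (d:ℝ) * Real.logb 2 n := by ring
          _ ≤ t := htb
          _ = (d:ℝ) * s := ht'
      exact le_of_mul_le_mul_left h1 hd0
    have hreal : (n:ℝ) ^ 2 ≤ (2:ℝ) ^ s := by
      have h1 : (n:ℝ) ^ 2 = (2:ℝ) ^ (2 * Real.logb 2 n) := by
        rw [mul_comm, Real.rpow_mul (by norm_num : (0:ℝ) ≤ 2),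
          Real.rpow_logb (by norm_num) (by norm_num) hn0]
        rw [show ((2:ℝ):ℝ) = ((2:ℕ):ℝ) by norm_num, Real.rpow_natCast]
      have h2 : (2:ℝ) ^ (2 * Real.logb 2 n) ≤ (2:ℝ) ^ ((s:ℕ):ℝ) :=
        (Real.rpow_le_rpow_left_iff (by norm_num : (1:ℝ) < 2)).2 hlog
      rw [Real.rpow_natCast] at h2
      linarith [h1 ▸ h2]
    exact_mod_cast hreal
  -- key: n * B.card ≤ Ω.card
  have hkey : n * B.card ≤ Ω.card := by
    have h1 : n * B.card ≤ n ^ 2 * Ct * C ^ (n - 1) := by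
      calc n * B.card ≤ n * (n * (Ct * C ^ (n - 1))) := Nat.mul_le_mul_left n hBcard
        _ = n ^ 2 * Ct * C ^ (n - 1) := by ring
    have h2 : n ^ 2 * Ct ≤ C := le_trans (Nat.mul_le_mul_right Ct hns) (choose_bound t s hst)
    calc n * B.card ≤ n ^ 2 * Ct * C ^ (n - 1) := h1
      _ ≤ C * C ^ (n - 1) := Nat.mul_le_mul_right _ h2
      _ = C ^ n := by
        rw [← pow_succ']
        congr 1
        omega
      _ = Ω.card := hΩcard.symm
  -- finish in ℝ
  have hΩpos : (0:ℝ) < Ω.card := by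
    rw [hΩcard]
    positivity
  have hsplit : ((Ω.filter (fun S => ∀ j ∉ D, ∃ i ∈ S j, ∀ k ∈ D, i ∉ S k)).card : ℝ)
      = (Ω.card : ℝ) - B.card := by
    have := Finset.card_filter_add_card_filter_not
      (s := Ω) (p := fun S => ∀ j ∉ D, ∃ i ∈ S j, ∀ k ∈ D, i ∉ S k)
    rw [hB]
    have h' : ((Ω.filter (fun S => ∀ j ∉ D, ∃ i ∈ S j, ∀ k ∈ D, i ∉ S k)).card : ℝ)
        + ((Ω.filter (fun S => ¬ ∀ j ∉ D, ∃ i ∈ S j, ∀ k ∈ D, i ∉ S k)).card : ℝ)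
        = (Ω.card : ℝ) := by exact_mod_cast this
    linarith
  rw [hsplit, sub_div, div_self (ne_of_gt hΩpos)]
  have hfrac : (B.card : ℝ) / Ω.card ≤ 1 / n := by
    rw [div_le_div_iff₀ hΩpos hn0]
    have : (n:ℝ) * B.card ≤ Ω.card := by exact_mod_cast hkey
    linarith
  linarith
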